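/- Let n₀ ∈ ω and let (s_ℓ)_{ℓ∈ω} be a sequence in ω^{<ω} such that t_{n₀}⌢ℓ ⊆ s_ℓ for every ℓ. Then for ν-almost every ρ ∈ Ω: if t_{n₀} ∉ W(ρ), then the set {ℓ ∈ ω : s_ℓ ∈ W(ρ)} is finite. -/

import Mathlib

open MeasureTheory
open scoped ENNReal

/-- `sFn e n ρ` is the finite sequence `t_n ⌢ ⟨ρ(t_n,0), …, ρ(t_n,n+1)⟩`. -/
def sFn (e : ℕ → List ℕ) (n : ℕ) (ρ : List ℕ × ℕ → ℕ) : List ℕ :=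
  e n ++ List.ofFn fun i : Fin (n + 2) => ρ (e n, (i : ℕ))

/-- `Wset e ρ = {s : s_{t_n}(ρ) ⊆ s for some n}`. -/
def Wset (e : ℕ → List ℕ) (ρ : List ℕ × ℕ → ℕ) : Set (List ℕ) :=
  {s | ∃ n, sFn e n ρ <+: s}

lemma sFn_length (e : ℕ → List ℕ) (n : ℕ) (ρ : List ℕ × ℕ → ℕ) :
    (sFn e n ρ).length = (e n).length + (n + 2) := by
  simp [sFn]

lemma en_prefix_sFn (e : ℕ → List ℕ) (n : ℕ) (ρ : List ℕ × ℕ → ℕ) :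
    e n <+: sFn e n ρ :=
  (e n).prefix_append _

theorem stmt2
    (e : ℕ → List ℕ) (hbij : Function.Bijective e)
    (hord : ∀ n ℓ, e n <+: e ℓ → e n ≠ e ℓ → n < ℓ)
    (hsuc : ∀ n ℓ t k, e n = t ++ [k] → e ℓ = t ++ [k + 1] → n < ℓ)
    (ν : Measure (List ℕ × ℕ → ℕ)) [IsProbabilityMeasure ν]
    (hν : ∀ (F : Finset (List ℕ × ℕ)) (g : List ℕ × ℕ → ℕ),
      ν {ρ | ∀ c ∈ F, ρ c = g c} = ∏ c ∈ F, ((2 : ℝ≥0∞)⁻¹) ^ (g c + 1))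
    (n₀ : ℕ) (s : ℕ → List ℕ) (hs : ∀ ℓ, e n₀ ++ [ℓ] <+: s ℓ) :
    ∀ᵐ ρ ∂ν, e n₀ ∉ Wset e ρ → {ℓ | s ℓ ∈ Wset e ρ}.Finite := by
  classical
  -- index of `e n₀ ++ [ℓ]` in the enumeration
  choose m hm using fun ℓ => hbij.2 (e n₀ ++ [ℓ])
  have hmle : ∀ ℓ, ℓ ≤ m ℓ := by
    have hsm : StrictMono m :=
      strictMono_nat_of_lt_succ fun ℓ => hsuc _ _ (e n₀) ℓ (hm ℓ) (hm (ℓ + 1))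
    exact fun ℓ => hsm.le_apply
  have hle : ∀ {n ℓ : ℕ}, e n₀ ++ [ℓ] <+: e n → ℓ ≤ n := by
    intro n ℓ hp
    refine (hmle ℓ).trans ?_
    rcases eq_or_ne (e (m ℓ)) (e n) with h | h
    · exact (hbij.1 h).le
    · exact (hord (m ℓ) n ((hm ℓ).symm ▸ hp) h).le
  have hle0 : ∀ {n : ℕ}, e n <+: e n₀ → n ≤ n₀ := by
    intro n hp
    rcases eq_or_ne (e n) (e n₀) with h | h
    · exact (hbij.1 h).le
    · exact (hord _ _ hp h).le
  -- the bad events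
  set B : ℕ → Set (List ℕ × ℕ → ℕ) :=
    fun ℓ => {ρ | ∃ n, e n₀ ++ [ℓ] <+: e n ∧ sFn e n ρ <+: s ℓ} with hB
  -- measure of a single event
  have hE : ∀ n ℓ : ℕ, ν {ρ | e n₀ ++ [ℓ] <+: e n ∧ sFn e n ρ <+: s ℓ} ≤
      ((2 : ℝ≥0∞)⁻¹) ^ (n + 2) := by
    intro n ℓ
    set F : Finset (List ℕ × ℕ) :=
      Finset.univ.image (fun i : Fin (n + 2) => ((e n, (i : ℕ)) : List ℕ × ℕ)) with hF
    set g : List ℕ × ℕ → ℕ := fun c => (s ℓ).getD ((e n).length + c.2) 0 with hg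
    have hcard : F.card = n + 2 := by
      rw [hF, Finset.card_image_of_injective _ (fun i j hij => by
        simpa [Fin.val_injective.eq_iff] using hij)]
      simp
    have hsub : {ρ | e n₀ ++ [ℓ] <+: e n ∧ sFn e n ρ <+: s ℓ} ⊆
        {ρ | ∀ c ∈ F, ρ c = g c} := by
      intro ρ hρ c hc
      simp only [hF, Finset.mem_image, Finset.mem_univ, true_and] at hc
      obtain ⟨i, rfl⟩ := hc
      obtain ⟨t, ht⟩ := hρ.2
      have hi : ((i : ℕ) : ℕ) < n + 2 := i.isLt
      have h1 : (s ℓ).getD ((e n).length + (i : ℕ)) 0 = (sFn e n ρ).getD ((e n).length + (i : ℕ)) 0 := by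
        rw [← ht, List.getD_append _ _ _ _ (by rw [sFn_length]; omega)]
      have h2 : (sFn e n ρ).getD ((e n).length + (i : ℕ)) 0 = ρ (e n, (i : ℕ)) := by
        rw [sFn, List.getD_append_right _ _ _ _ (Nat.le_add_right _ _),
          Nat.add_sub_cancel_left,
          List.getD_eq_getElem _ _ (by simp; omega), List.getElem_ofFn]
      rw [hg]
      simp only
      rw [h1, h2]
    calc ν {ρ | e n₀ ++ [ℓ] <+: e n ∧ sFn e n ρ <+: s ℓ}
        ≤ ν {ρ | ∀ c ∈ F, ρ c = g c} := measure_mono hsub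
      _ = ∏ c ∈ F, ((2 : ℝ≥0∞)⁻¹) ^ (g c + 1) := hν F g
      _ ≤ ∏ _c ∈ F, ((2 : ℝ≥0∞)⁻¹) := by
          refine Finset.prod_le_prod' fun c _ => ?_
          rw [pow_succ]
          calc ((2 : ℝ≥0∞)⁻¹) ^ (g c) * 2⁻¹ ≤ 1 * 2⁻¹ := by
                gcongr
                exact pow_le_one' (by simp) _
            _ = 2⁻¹ := one_mul _
      _ = ((2 : ℝ≥0∞)⁻¹) ^ F.card := Finset.prod_const _
      _ = ((2 : ℝ≥0∞)⁻¹) ^ (n + 2) := by rw [hcard]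
  -- measure of B ℓ
  have hBν : ∀ ℓ, ν (B ℓ) ≤ ((2 : ℝ≥0∞)⁻¹) ^ (ℓ + 1) := by
    intro ℓ
    have hBsub : B ℓ ⊆ ⋃ k : ℕ, {ρ | e n₀ ++ [ℓ] <+: e (ℓ + k) ∧ sFn e (ℓ + k) ρ <+: s ℓ} := by
      rintro ρ ⟨n, h1, h2⟩
      refine Set.mem_iUnion.2 ⟨n - ℓ, ?_⟩
      rw [Nat.add_sub_cancel' (hle h1)]
      exact ⟨h1, h2⟩
    calc ν (B ℓ)
        ≤ ∑' k : ℕ, ν {ρ | e n₀ ++ [ℓ] <+: e (ℓ + k) ∧ sFn e (ℓ + k) ρ <+: s ℓ} :=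
          (measure_mono hBsub).trans (measure_iUnion_le _)
      _ ≤ ∑' k : ℕ, ((2 : ℝ≥0∞)⁻¹) ^ (ℓ + k + 2) :=
          ENNReal.tsum_le_tsum fun k => hE (ℓ + k) ℓ
      _ = ((2 : ℝ≥0∞)⁻¹) ^ (ℓ + 2) * ∑' k : ℕ, ((2 : ℝ≥0∞)⁻¹) ^ k := by
          rw [← ENNReal.tsum_mul_left]
          congr 1 with k
          rw [← pow_add]
          ring_nf
      _ = ((2 : ℝ≥0∞)⁻¹) ^ (ℓ + 2) * 2 := by
          rw [ENNReal.tsum_geometric, ENNReal.one_sub_inv_two, inv_inv]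
      _ = ((2 : ℝ≥0∞)⁻¹) ^ (ℓ + 1) := by
          rw [pow_succ, mul_assoc, ENNReal.inv_mul_cancel (by norm_num) (by norm_num), mul_one]
  have htsum : (∑' ℓ : ℕ, ν (B ℓ)) ≠ ∞ := by
    refine ne_top_of_le_ne_top (b := ∑' ℓ : ℕ, ((2 : ℝ≥0∞)⁻¹) ^ (ℓ + 1)) ?_
      (ENNReal.tsum_le_tsum hBν)
    have : (∑' ℓ : ℕ, ((2 : ℝ≥0∞)⁻¹) ^ (ℓ + 1)) = 2⁻¹ * ∑' ℓ : ℕ, ((2 : ℝ≥0∞)⁻¹) ^ ℓ := by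
      rw [← ENNReal.tsum_mul_left]
      congr 1 with ℓ
      rw [pow_succ]
      ring
    rw [this, ENNReal.tsum_geometric, ENNReal.one_sub_inv_two, inv_inv]
    norm_num
  -- Borel–Cantelli
  filter_upwards [ae_finite_setOf_mem htsum] with ρ hρ hW
  -- the deterministic part
  refine Set.Finite.subset (hρ.union (((Finset.range (n₀ + 1)).image
      (fun n => (sFn e n ρ).getD (e n₀).length 0)).finite_toSet)) ?_
  intro ℓ hℓ
  obtain ⟨n, hn⟩ := hℓ
  by_cases hBℓ : ρ ∈ B ℓ
  · exact Or.inl hBℓ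
  -- key claim : e n₀ ++ [ℓ] <+: sFn e n ρ with n ≤ n₀
  have hp : e n₀ ++ [ℓ] <+: sFn e n ρ := by
    rcases List.prefix_or_prefix_of_prefix hn (hs ℓ) with h1 | h2
    · by_cases hlen : (sFn e n ρ).length ≤ (e n₀).length
      · exact absurd ⟨n, List.prefix_of_prefix_length_le h1 ((e n₀).prefix_append [ℓ]) hlen⟩ hW
      · have hlen2 : (sFn e n ρ).length = (e n₀ ++ [ℓ]).length := by
          have := h1.length_le
          simp only [List.length_append, List.length_singleton] at this ⊢
          omega
        rw [h1.eq_of_length hlen2]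
    · exact h2
  have hne : ¬ (e n₀ ++ [ℓ] <+: e n) := fun hpre => hBℓ ⟨n, hpre, hn⟩
  have hen : e n <+: e n₀ ++ [ℓ] := by
    rcases List.prefix_or_prefix_of_prefix (en_prefix_sFn e n ρ) hp with h | h
    · exact h
    · exact absurd h hne
  have hlen2 : (e n).length ≤ (e n₀).length := by
    by_contra h
    push_neg at h
    exact hne (List.prefix_of_prefix_length_le hp (en_prefix_sFn e n ρ)
      (by simp only [List.length_append, List.length_singleton]; omega))
  have hn0 : n ≤ n₀ := hle0 (List.prefix_of_prefix_length_le hen ((e n₀).prefix_append [ℓ]) hlen2)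
  -- conclude ℓ is in the image
  right
  simp only [Finset.coe_image, Set.mem_image, Finset.mem_coe, Finset.mem_range]
  refine ⟨n, by omega, ?_⟩
  obtain ⟨t, ht⟩ := hp
  rw [← ht, List.getD_append _ _ _ _ (by simp), List.getD_append_right _ _ _ _ le_rfl]
  simp
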